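/- Let H ≤ Sym(p) be a transitive group of prime degree p and P a Sylow p-subgroup of H. Then P is cyclic of order p, and the normalizer N_H(P) equals P if and only if H = P. -/

import Mathlib

/-- Let `H ≤ Sym(p)` be a transitive group of prime degree `p` and `P` a Sylow
`p`-subgroup of `H`.  Then `P` is cyclic of order `p`, and `N_H(P) = P` if and
only if `H = P`. -/
theorem sylow_transitive_prime_degree (p : ℕ) (hp : p.Prime)
    (H : Subgroup (Equiv.Perm (Fin p)))
    (hH : MulAction.IsPretransitive H (Fin p))
    (P : Sylow p H) :
    IsCyclic (P : Subgroup H) ∧ Nat.card (P : Subgroup H) = p ∧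
      (Subgroup.normalizer ((P : Subgroup H) : Set H) = (P : Subgroup H) ↔ (P : Subgroup H) = ⊤) := by
  haveI := Fact.mk hp
  haveI := hH
  have hp0 : 0 < p := hp.pos
  have hcardFin : Nat.card (Fin p) = p := by simp
  -- `p` divides the order of `H`
  have hpH : p ∣ Nat.card H := by
    have h1 : (MulAction.stabilizer H (⟨0, hp0⟩ : Fin p)).index = p := by
      rw [MulAction.index_stabilizer_of_transitive, hcardFin]
    have := Subgroup.index_dvd_card (MulAction.stabilizer H (⟨0, hp0⟩ : Fin p))
    rwa [h1] at this
  -- `p ^ 2` does not divide the order of `H`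
  have hHdvd : Nat.card H ∣ p.factorial := by
    have h6 : Nat.card (Equiv.Perm (Fin p)) = p.factorial := by
      simp [Nat.card_eq_fintype_card, Fintype.card_perm]
    have := Subgroup.card_subgroup_dvd_card H
    rwa [h6] at this
  have hp2 : ¬ p ^ 2 ∣ Nat.card H := by
    intro h2
    have h3 : p ^ 2 ∣ p.factorial := h2.trans hHdvd
    have h4 : p ∣ (p - 1).factorial := by
      have h5 : p * (p - 1).factorial = p.factorial := Nat.mul_factorial_pred hp0.ne'
      have : p * p ∣ p * (p - 1).factorial := by rwa [h5, ← sq]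
      exact (mul_dvd_mul_iff_left hp.pos.ne').mp this
    have := (Nat.Prime.dvd_factorial hp).mp h4
    omega
  -- the Sylow subgroup has order exactly `p`
  have hcardH : Nat.card H ≠ 0 := Nat.card_pos.ne'
  have hfact : (Nat.card H).factorization p = 1 := by
    have h1 : 1 ≤ (Nat.card H).factorization p := by
      rw [← hp.pow_dvd_iff_le_factorization hcardH, pow_one]; exact hpH
    have h2 : ¬ 2 ≤ (Nat.card H).factorization p := by
      rw [← hp.pow_dvd_iff_le_factorization hcardH]; exact hp2
    omega
  have hcardP : Nat.card (P : Subgroup H) = p := by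
    rw [Sylow.card_eq_multiplicity, hfact, pow_one]
  have hcyc : IsCyclic (P : Subgroup H) := isCyclic_of_prime_card hcardP
  refine ⟨hcyc, hcardP, ?_, ?_⟩
  · -- `N(P) = P → P = ⊤`
    intro hN
    haveI : IsMulCommutative (P : Subgroup H) := by
      haveI := hcyc
      letI : CommGroup (P : Subgroup H) := IsCyclic.commGroup
      exact ⟨⟨mul_comm⟩⟩
    have hP_le_cent : Subgroup.normalizer ((P : Subgroup H) : Set H) ≤ Subgroup.centralizer ((P : Subgroup H) : Set H) := by
      rw [hN]; exact Subgroup.le_centralizer _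
    have hcomp := MonoidHom.ker_transferSylow_isComplement' P hP_le_cent
    set K : Subgroup H := (MonoidHom.transferSylow P hP_le_cent).ker with hKdef
    haveI : K.Normal := MonoidHom.normal_ker _
    have hpK : ¬ p ∣ Nat.card K := MonoidHom.not_dvd_card_ker_transferSylow P hP_le_cent
    -- every element of `K` acts trivially on `Fin p`
    have hfix : ∀ k ∈ K, ∀ x : Fin p, (k : Equiv.Perm (Fin p)) x = x := by
      intro k hk x
      have hblock : MulAction.IsBlock H (MulAction.orbit K x) :=
        MulAction.IsBlock.orbit_of_normal x
      have hd1 : (MulAction.orbit K x).ncard ∣ p := by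
        have := hblock.ncard_dvd_card ⟨x, MulAction.mem_orbit_self x⟩
        rwa [hcardFin] at this
      have hd2 : (MulAction.orbit K x).ncard ∣ Nat.card K := by
        have := Subgroup.index_dvd_card (MulAction.stabilizer K x)
        rwa [MulAction.index_stabilizer] at this
      have hone : (MulAction.orbit K x).ncard = 1 := by
        rcases (Nat.Prime.eq_one_or_self_of_dvd hp _ hd1) with h | h
        · exact h
        · rw [h] at hd2
          exact absurd hd2 hpK
      obtain ⟨a, ha⟩ := Set.ncard_eq_one.mp hone
      have hxa : x = a := by
        have : x ∈ MulAction.orbit K x := MulAction.mem_orbit_self x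
        rw [ha] at this; exact this
      have hkx : (⟨k, hk⟩ : K) • x ∈ MulAction.orbit K x := MulAction.mem_orbit x _
      rw [ha] at hkx
      have h7 : (⟨k, hk⟩ : K) • x = a := hkx
      rw [← hxa] at h7
      simpa [Submonoid.smul_def, Subgroup.smul_def, Equiv.Perm.smul_def] using h7
    have hKbot : K = ⊥ := by
      rw [eq_bot_iff]
      intro k hk
      have : (k : Equiv.Perm (Fin p)) = 1 := Equiv.ext (hfix k hk)
      exact Subgroup.mem_bot.mpr (Subtype.ext this)
    have hcards : Nat.card K * Nat.card (P : Subgroup H) = Nat.card H :=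
      hcomp.card_mul
    rw [hKbot, Subgroup.card_bot, one_mul] at hcards
    exact Subgroup.eq_top_of_card_eq _ hcards
  · -- `P = ⊤ → N(P) = P`
    intro hPt
    rw [hPt]
    exact le_antisymm le_top Subgroup.le_normalizer
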